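/- Let f : ℝ → ℝ be three times continuously differentiable in a neighborhood of t with f(t) > 0, let s ∈ ℝ, and set r = −3s + 6 and p = 3s − 8. Then, as h → 0⁺, f(t−h)^s · f(t−2h)^r · f(t−3h)^p · f(t−4h)^{1−r−s−p} = f(t) + O(h³), where the powers are real powers of positive reals. -/

import Mathlib

open Filter Asymptotics Topology

private lemma step_bigO {g g' : ℝ → ℝ} {k : ℕ} {ε : ℝ} (hε : 0 < ε)
    (hd : ∀ x ∈ Metric.ball (0:ℝ) ε, HasDerivAt g (g' x) x)
    (h0 : g 0 = 0)
    (hO : g' =O[𝓝 (0:ℝ)] fun x => x ^ k) :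
    g =O[𝓝 (0:ℝ)] fun x => x ^ (k+1) := by
  rcases hO.exists_pos with ⟨c, hc, hbound⟩
  rw [isBigOWith_iff, Metric.eventually_nhds_iff] at hbound
  rcases hbound with ⟨δ, hδ, hb⟩
  rw [isBigO_iff]
  refine ⟨c, ?_⟩
  rw [Metric.eventually_nhds_iff]
  refine ⟨min δ ε, lt_min hδ hε, ?_⟩
  intro h hh
  simp only [Real.dist_eq, sub_zero] at hh
  have hhδ : |h| < δ := lt_of_lt_of_le hh (min_le_left _ _)
  have hhε : |h| < ε := lt_of_lt_of_le hh (min_le_right _ _)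
  have habs : ∀ x ∈ Set.uIcc (0:ℝ) h, |x| ≤ |h| := by
    intro x hx
    rw [Set.mem_uIcc] at hx
    rw [abs_le]
    constructor
    · rcases hx with ⟨h1, h2⟩ | ⟨h1, h2⟩ <;> nlinarith [neg_abs_le h, abs_nonneg h]
    · rcases hx with ⟨h1, h2⟩ | ⟨h1, h2⟩ <;> nlinarith [le_abs_self h, abs_nonneg h]
  have key : ‖g h - g 0‖ ≤ (c * |h| ^ k) * ‖h - 0‖ := by
    apply Convex.norm_image_sub_le_of_norm_hasDerivWithin_le (f' := g')
      (fun x hx => (hd x (by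
        simp only [Metric.mem_ball, Real.dist_eq, sub_zero]
        exact lt_of_le_of_lt (habs x hx) hhε)).hasDerivWithinAt)
      ?_ (convex_uIcc _ _) Set.left_mem_uIcc Set.right_mem_uIcc
    intro x hx
    have h1 := hb (y := x) (by
      simp only [Real.dist_eq, sub_zero]
      exact lt_of_le_of_lt (habs x hx) hhδ)
    calc ‖g' x‖ ≤ c * ‖x ^ k‖ := h1
      _ ≤ c * |h| ^ k := by
          rw [norm_pow, Real.norm_eq_abs]
          exact mul_le_mul_of_nonneg_left (pow_le_pow_left₀ (abs_nonneg x) (habs x hx) k) hc.le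
  rw [h0, sub_zero, sub_zero] at key
  calc ‖g h‖ ≤ (c * |h| ^ k) * ‖h‖ := key
    _ = c * ‖h ^ (k+1)‖ := by
        rw [norm_pow, Real.norm_eq_abs, pow_succ]; ring

/-- Taylor expansion of the third-order Patankar weight: for `f` three times
continuously differentiable near `t` with `f t > 0`, and exponents
`r = −3s + 6`, `p = 3s − 8`, as `h → 0⁺`,
`f(t−h)^s · f(t−2h)^r · f(t−3h)^p · f(t−4h)^{1−r−s−p} = f(t) + O(h³)`,
with real powers of positive reals. -/
theorem mpms3_weight_taylor
    (f : ℝ → ℝ) (t : ℝ) (hf : ContDiffAt ℝ 3 f t) (hft : 0 < f t)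
    (s r p : ℝ) (hr : r = -3*s + 6) (hp : p = 3*s - 8) :
    (fun h : ℝ =>
        f (t - h) ^ s * f (t - 2*h) ^ r * f (t - 3*h) ^ p
          * f (t - 4*h) ^ (1 - r - s - p) - f t)
      =O[𝓝[>] (0:ℝ)] fun h : ℝ => h ^ 3 := by
  set q : ℝ := 1 - r - s - p with hq
  set G : ℝ → ℝ := fun x => Real.log (f x) with hGdef
  have hG : ContDiffAt ℝ 3 G t := hf.log hft.ne'
  obtain ⟨u, hu_nhds, hu⟩ := hG.contDiffOn le_rfl (by simp)
  obtain ⟨ε, hε, hball⟩ := Metric.mem_nhds_iff.1 hu_nhds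
  set v : Set ℝ := Metric.ball t ε with hvdef
  have hv : ContDiffOn ℝ 3 G v := hu.mono hball
  set G1 : ℝ → ℝ := deriv G with hG1def
  set G2 : ℝ → ℝ := deriv G1 with hG2def
  have hG1 : ContDiffOn ℝ 2 G1 v := hv.deriv_of_isOpen Metric.isOpen_ball (by norm_num)
  have hG2 : ContDiffOn ℝ 1 G2 v := hG1.deriv_of_isOpen Metric.isOpen_ball (by norm_num)
  have hGd : ∀ x ∈ v, HasDerivAt G (G1 x) x := fun x hx =>
    ((hv.differentiableOn (by norm_num)).differentiableAt
      (Metric.isOpen_ball.mem_nhds hx)).hasDerivAt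
  have hG1d : ∀ x ∈ v, HasDerivAt G1 (G2 x) x := fun x hx =>
    ((hG1.differentiableOn (by norm_num)).differentiableAt
      (Metric.isOpen_ball.mem_nhds hx)).hasDerivAt
  have htmem : t ∈ v := Metric.mem_ball_self hε
  have hG2d : DifferentiableAt ℝ G2 t :=
    (hG2.differentiableOn (by norm_num)).differentiableAt (Metric.isOpen_ball.mem_nhds htmem)
  -- membership helper
  have hmem : ∀ x : ℝ, |x| < ε/4 → ∀ k : ℝ, |k| ≤ 4 → t - k*x ∈ v := by
    intro x hx k hk
    simp only [hvdef, Metric.mem_ball, Real.dist_eq]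
    have h1 : |t - k*x - t| = |k| * |x| := by
      rw [show t - k*x - t = -(k*x) by ring, abs_neg, abs_mul]
    rw [h1]
    nlinarith [abs_nonneg x, abs_nonneg k]
  -- derivative of affine composition
  have haff : ∀ (k x : ℝ), HasDerivAt (fun h : ℝ => t - k*h) (-k) x := by
    intro k x
    simpa [Pi.sub_def] using (hasDerivAt_const x t).sub ((hasDerivAt_id x).const_mul k)
  have hcomp : ∀ (k : ℝ) (x : ℝ), t - k*x ∈ v →
      HasDerivAt (fun h => G (t - k*h)) (G1 (t - k*x) * (-k)) x := by
    intro k x hx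
    simpa [Function.comp_def] using (hGd _ hx).comp x (haff k x)
  have hcomp1 : ∀ (k : ℝ) (x : ℝ), t - k*x ∈ v →
      HasDerivAt (fun h => G1 (t - k*h)) (G2 (t - k*x) * (-k)) x := by
    intro k x hx
    simpa [Function.comp_def] using (hG1d _ hx).comp x (haff k x)
  -- ψ and its derivatives
  set ψ : ℝ → ℝ := fun h => s * G (t - 1*h) + r * G (t - 2*h) + p * G (t - 3*h)
      + q * G (t - 4*h) - G t with hψdef
  set ψ1 : ℝ → ℝ := fun x => s * (G1 (t - 1*x) * (-1)) + r * (G1 (t - 2*x) * (-2))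
      + p * (G1 (t - 3*x) * (-3)) + q * (G1 (t - 4*x) * (-4)) with hψ1def
  set ψ2 : ℝ → ℝ := fun x => s * (G2 (t - 1*x) * (-1) * (-1)) + r * (G2 (t - 2*x) * (-2) * (-2))
      + p * (G2 (t - 3*x) * (-3) * (-3)) + q * (G2 (t - 4*x) * (-4) * (-4)) with hψ2def
  have hε4 : (0:ℝ) < ε/4 := by linarith
  have hψd : ∀ x ∈ Metric.ball (0:ℝ) (ε/4), HasDerivAt ψ (ψ1 x) x := by
    intro x hx
    simp only [Metric.mem_ball, Real.dist_eq, sub_zero] at hx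
    have m1 := hmem x hx 1 (by norm_num)
    have m2 := hmem x hx 2 (by norm_num)
    have m3 := hmem x hx 3 (by norm_num)
    have m4 := hmem x hx 4 (by norm_num)
    exact ((((hcomp 1 x m1).const_mul s).add ((hcomp 2 x m2).const_mul r)).add
      ((hcomp 3 x m3).const_mul p)).add ((hcomp 4 x m4).const_mul q) |>.sub_const (G t)
  have hψ1d : ∀ x ∈ Metric.ball (0:ℝ) (ε/4), HasDerivAt ψ1 (ψ2 x) x := by
    intro x hx
    simp only [Metric.mem_ball, Real.dist_eq, sub_zero] at hx
    have m1 := hmem x hx 1 (by norm_num)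
    have m2 := hmem x hx 2 (by norm_num)
    have m3 := hmem x hx 3 (by norm_num)
    have m4 := hmem x hx 4 (by norm_num)
    exact ((((((hcomp1 1 x m1).mul_const (-1)).const_mul s).add
      (((hcomp1 2 x m2).mul_const (-2)).const_mul r)).add
      (((hcomp1 3 x m3).mul_const (-3)).const_mul p)).add
      (((hcomp1 4 x m4).mul_const (-4)).const_mul q))
  have hψ0 : ψ 0 = 0 := by
    simp only [hψdef, mul_zero, sub_zero]
    rw [hq]; ring
  have hψ10 : ψ1 0 = 0 := by
    simp only [hψ1def, mul_zero, sub_zero]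
    rw [hq, hr, hp]; ring
  have hψ20 : ψ2 0 = 0 := by
    simp only [hψ2def, mul_zero, sub_zero]
    rw [hq, hr, hp]; ring
  -- ψ2 differentiable at 0
  have haffd : ∀ k : ℝ, DifferentiableAt ℝ (fun h : ℝ => t - k*h) 0 := fun k =>
    (haff k 0).differentiableAt
  have hG2d' : ∀ k : ℝ, DifferentiableAt ℝ (fun x => G2 (t - k*x)) 0 := by
    intro k
    exact DifferentiableAt.comp 0 (by simpa using hG2d) (haffd k)
  have hψ2diff : DifferentiableAt ℝ ψ2 0 := by
    apply DifferentiableAt.add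
    apply DifferentiableAt.add
    apply DifferentiableAt.add
    all_goals exact (((hG2d' _).mul_const _).mul_const _).const_mul _
  have hψ2O : ψ2 =O[𝓝 (0:ℝ)] fun x => x ^ 1 := by
    have h := hψ2diff.isBigO_sub
    simpa [hψ20, pow_one] using h
  have hψ1O : ψ1 =O[𝓝 (0:ℝ)] fun x => x ^ 2 := step_bigO hε4 hψ1d hψ10 hψ2O
  have hψO : ψ =O[𝓝 (0:ℝ)] fun x => x ^ 3 := step_bigO hε4 hψd hψ0 hψ1O
  -- positivity near 0
  have hfc : ContinuousAt f t := hf.continuousAt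
  have hpos : ∀ k : ℝ, ∀ᶠ h in 𝓝 (0:ℝ), 0 < f (t - k*h) := by
    intro k
    have hc2 : Continuous (fun h : ℝ => t - k * h) := by fun_prop
    have h1 : Tendsto (fun h : ℝ => t - k*h) (𝓝 0) (𝓝 t) := by
      simpa using hc2.tendsto 0
    have htd : Tendsto (fun h : ℝ => f (t - k*h)) (𝓝 0) (𝓝 (f t)) :=
      hfc.tendsto.comp h1
    exact htd.eventually (eventually_gt_nhds hft)
  -- identity
  have hEq : (fun h : ℝ =>
        f (t - h) ^ s * f (t - 2*h) ^ r * f (t - 3*h) ^ p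
          * f (t - 4*h) ^ q - f t) =ᶠ[𝓝 (0:ℝ)]
      (fun h => f t * (Real.exp (ψ h) - 1)) := by
    filter_upwards [hpos 1, hpos 2, hpos 3, hpos 4] with h h1 h2 h3 h4
    rw [one_mul] at h1
    rw [Real.rpow_def_of_pos h1, Real.rpow_def_of_pos h2, Real.rpow_def_of_pos h3,
      Real.rpow_def_of_pos h4, ← Real.exp_add, ← Real.exp_add, ← Real.exp_add]
    rw [show ψ h = (Real.log (f (t - h)) * s + Real.log (f (t - 2*h)) * r
        + Real.log (f (t - 3*h)) * p + Real.log (f (t - 4*h)) * q) - Real.log (f t) from by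
      simp only [hψdef, hGdef, one_mul]; ring]
    rw [Real.exp_sub, Real.exp_log hft]
    field_simp
  -- exp - 1 = O(x) at 0
  have hOexp : (fun x : ℝ => Real.exp x - 1) =O[𝓝 (0:ℝ)] id := by
    have h := (Real.differentiable_exp.differentiableAt (x := 0)).isBigO_sub
    simp [Real.exp_zero] at h; exact h
  have hψcont : Tendsto ψ (𝓝 (0:ℝ)) (𝓝 (0:ℝ)) := by
    have := (hψd 0 (Metric.mem_ball_self hε4)).continuousAt
    rw [ContinuousAt, hψ0] at this
    exact this
  have h1 : (fun h => Real.exp (ψ h) - 1) =O[𝓝 (0:ℝ)] ψ := by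
    simpa [Function.comp_def] using hOexp.comp_tendsto hψcont
  have h2 : (fun h => f t * (Real.exp (ψ h) - 1)) =O[𝓝 (0:ℝ)] (fun h : ℝ => h^3) :=
    (h1.trans hψO).const_mul_left (f t)
  exact (h2.congr' hEq.symm EventuallyEq.rfl).mono nhdsWithin_le_nhds
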